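/- Let k ≥ 3 be an integer. The map x ↦ Int.fract(k·x) maps the set C_k \ {1} onto itself: the image of C_k \ {1} under this map equals C_k \ {1}. -/

import Mathlib

open scoped ENNReal

/-- The `k`-transformation `x ↦ k·x mod 1`. -/
noncomputable def Tmap (k : ℕ) (x : ℝ) : ℝ := Int.fract ((k : ℝ) * x)

/-- The survivor set of the `k`-transformation with hole `(a,b)`. -/
def W (k : ℕ) (a b : ℝ) : Set ℝ :=
  {x | x ∈ Set.Ico (0 : ℝ) 1 ∧ ∀ n : ℕ, (Tmap k)^[n] x ∉ Set.Ioo a b}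

/-- The generalized Cantor set `C_k`. -/
def Ck (k : ℕ) : Set ℝ :=
  {x | ∃ a : ℕ → ℕ, (∀ n, a n = 0 ∨ a n = k - 1) ∧
    x = ∑' n : ℕ, (a n : ℝ) / (k : ℝ) ^ (n + 1)}

/-- The `n`-th `k`-ary digit of `x`. -/
noncomputable def digit (k : ℕ) (n : ℕ) (x : ℝ) : ℤ :=
  ⌊(k : ℝ) ^ (n + 1) * x⌋ % (k : ℤ)

open Classical in
/-- The generalized Cantor function `g_k`. -/
noncomputable def gk (k : ℕ) (x : ℝ) : ℝ :=
  if x = 1 then 1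
  else if ∀ n, digit k n x = 0 ∨ digit k n x = (k : ℤ) - 1 then
    ∑' n : ℕ, (digit k n x : ℝ) / (((k : ℝ) - 1) * 2 ^ (n + 1))
  else
    (∑ n ∈ Finset.range (sInf {n : ℕ | ¬(digit k n x = 0 ∨ digit k n x = (k : ℤ) - 1)}),
      (digit k n x : ℝ) / (((k : ℝ) - 1) * 2 ^ (n + 1))) +
    1 / 2 ^ (sInf {n : ℕ | ¬(digit k n x = 0 ∨ digit k n x = (k : ℤ) - 1)} + 1)

/-- The Thue–Morse sequence: parity of the number of 1s in the binary expansion. -/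
def tm (n : ℕ) : ℕ := (Nat.digits 2 n).sum % 2

/-- the map `x ↦ Int.fract (k·x)` maps `C_k \ {1}` onto itself. -/

lemma aux_summable (k : ℕ) (hk : 3 ≤ k) (a : ℕ → ℕ) (ha : ∀ n, a n = 0 ∨ a n = k - 1) :
    Summable (fun n : ℕ => (a n : ℝ) / (k : ℝ) ^ (n + 1)) := by
  have hk1 : (1:ℝ) < k := by
    have : (3:ℝ) ≤ k := by exact_mod_cast hk
    linarith
  have hg : Summable (fun n : ℕ => ((k:ℝ)-1)/k * (1/k)^n) :=
    (summable_geometric_of_lt_one (by positivity)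
      (by rw [div_lt_one (by linarith)]; linarith)).mul_left _
  apply Summable.of_nonneg_of_le (fun n => by positivity) (fun n => ?_) hg
  have han : (a n : ℝ) ≤ (k:ℝ) - 1 := by
    rcases ha n with h | h
    · rw [h]; push_cast; linarith
    · rw [h, Nat.cast_sub (by omega)]; push_cast; linarith
  have h2 : ((k:ℝ)-1)/k*(1/k)^n = ((k:ℝ)-1)/(k:ℝ)^(n+1) := by
    rw [div_pow, one_pow, div_mul_div_comm, mul_one, ← pow_succ']
  rw [h2]
  exact div_le_div_of_nonneg_right han (by positivity)

lemma aux_nonneg (k : ℕ) (a : ℕ → ℕ) :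
    0 ≤ ∑' n : ℕ, (a n : ℝ) / (k : ℝ) ^ (n + 1) :=
  tsum_nonneg (fun n => by positivity)

lemma aux_le_one (k : ℕ) (hk : 3 ≤ k) (a : ℕ → ℕ) (ha : ∀ n, a n = 0 ∨ a n = k - 1) :
    ∑' n : ℕ, (a n : ℝ) / (k : ℝ) ^ (n + 1) ≤ 1 := by
  have hk1 : (1:ℝ) < k := by
    have : (3:ℝ) ≤ k := by exact_mod_cast hk
    linarith
  have hg : Summable (fun n : ℕ => ((k:ℝ)-1)/k * (1/k)^n) :=
    (summable_geometric_of_lt_one (by positivity)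
      (by rw [div_lt_one (by linarith)]; linarith)).mul_left _
  have hle : ∑' n : ℕ, (a n : ℝ) / (k : ℝ) ^ (n + 1)
      ≤ ∑' n : ℕ, ((k:ℝ)-1)/k * (1/k)^n := by
    apply Summable.tsum_le_tsum _ (aux_summable k hk a ha) hg
    intro n
    have han : (a n : ℝ) ≤ (k:ℝ) - 1 := by
      rcases ha n with h | h
      · rw [h]; push_cast; linarith
      · rw [h, Nat.cast_sub (by omega)]; push_cast; linarith
    have h2 : ((k:ℝ)-1)/k*(1/k)^n = ((k:ℝ)-1)/(k:ℝ)^(n+1) := by rw [div_pow, one_pow, div_mul_div_comm, mul_one, ← pow_succ']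
    rw [h2]
    exact div_le_div_of_nonneg_right han (by positivity)
  have hgeo : ∑' n : ℕ, ((k:ℝ)-1)/k * (1/k)^n = 1 := by
    rw [tsum_mul_left, tsum_geometric_of_lt_one (by positivity)
      (by rw [div_lt_one (by linarith)]; linarith)]
    field_simp
    rw [div_self (sub_ne_zero_of_ne (ne_of_gt hk1))]
  linarith [hle, hgeo.le]


lemma aux_shift (k : ℕ) (hk : 3 ≤ k) (a : ℕ → ℕ) (ha : ∀ n, a n = 0 ∨ a n = k - 1) :
    ∑' n : ℕ, (a n : ℝ) / (k : ℝ) ^ (n + 1)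
      = (a 0 : ℝ) / k + (1/(k:ℝ)) * ∑' n : ℕ, (a (n+1) : ℝ) / (k : ℝ) ^ (n + 1) := by
  have hk0 : (0:ℝ) < k := by
    have : (3:ℝ) ≤ k := by exact_mod_cast hk
    linarith
  rw [Summable.tsum_eq_zero_add (aux_summable k hk a ha)]
  congr 1
  · norm_num
  · rw [← tsum_mul_left]
    apply tsum_congr
    intro n
    rw [pow_succ']
    field_simp

theorem stmt5 (k : ℕ) (hk : 3 ≤ k) :
    (fun x : ℝ => Int.fract ((k : ℝ) * x)) '' (Ck k \ {1}) = Ck k \ {1} := by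
  have hk3 : (3:ℝ) ≤ k := by exact_mod_cast hk
  have hk1 : (1:ℝ) < k := by linarith
  have hk0 : (0:ℝ) < k := by linarith
  have hkne : (k:ℝ) ≠ 0 := ne_of_gt hk0
  ext y
  simp only [Set.mem_image, Set.mem_diff, Set.mem_singleton_iff]
  constructor
  · rintro ⟨x, ⟨⟨a, ha, rfl⟩, hx1⟩, rfl⟩
    set b : ℕ → ℕ := fun n => a (n+1) with hb
    have hbprop : ∀ n, b n = 0 ∨ b n = k-1 := fun n => ha (n+1)
    set Y := ∑' n : ℕ, (b n : ℝ)/(k:ℝ)^(n+1) with hYdef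
    have hkx : (k:ℝ) * (∑' n : ℕ, (a n : ℝ) / (k : ℝ) ^ (n + 1)) = (a 0 : ℝ) + Y := by
      rw [aux_shift k hk a ha]
      field_simp
      rfl
    have hfr : Int.fract ((k:ℝ) * (∑' n : ℕ, (a n : ℝ) / (k : ℝ) ^ (n + 1)))
        = Int.fract Y := by
      rw [hkx, show ((a 0 : ℝ)) = ((a 0 : ℤ) : ℝ) by push_cast; rfl, Int.fract_intCast_add]
    rw [hfr]
    by_cases hY1 : Y = 1
    · rw [hY1, Int.fract_one]
      refine ⟨⟨fun _ => 0, fun n => Or.inl rfl, ?_⟩, by norm_num⟩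
      simp
    · have hYlt : Y < 1 := lt_of_le_of_ne (aux_le_one k hk b hbprop) hY1
      rw [Int.fract_eq_self.2 ⟨aux_nonneg k b, hYlt⟩]
      exact ⟨⟨b, hbprop, rfl⟩, hY1⟩
  · rintro ⟨⟨a, ha, rfl⟩, hy1⟩
    set Y := ∑' n : ℕ, (a n : ℝ)/(k:ℝ)^(n+1) with hYdef
    have hYlt : Y < 1 := lt_of_le_of_ne (aux_le_one k hk a ha) hy1
    have hY0 : 0 ≤ Y := aux_nonneg k a
    set b : ℕ → ℕ := fun n => Nat.casesOn n 0 (fun m => a m) with hb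
    have hbprop : ∀ n, b n = 0 ∨ b n = k-1 := by
      intro n
      cases n with
      | zero => exact Or.inl rfl
      | succ m => exact ha m
    have hX : ∑' n : ℕ, (b n : ℝ)/(k:ℝ)^(n+1) = (1/(k:ℝ)) * Y := by
      rw [aux_shift k hk b hbprop]
      simp [hb]
      exact Or.inl hYdef.symm
    refine ⟨∑' n : ℕ, (b n : ℝ)/(k:ℝ)^(n+1), ⟨⟨b, hbprop, rfl⟩, ?_⟩, ?_⟩
    · rw [hX]
      intro h
      have : Y = k := by
        field_simp at h
        linarith [h]
      linarith [hYlt, this]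
    · rw [hX]
      have : (k:ℝ) * ((1/(k:ℝ)) * Y) = Y := by field_simp
      rw [this, Int.fract_eq_self.2 ⟨hY0, hYlt⟩]
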